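/- Let α ∈ (0,1), let f : X → Y, and let (D_n)_{n≥1} be a sequence of probability mass functions on X such that n ↦ supp_α((D_n).map f) is monotone nondecreasing and tends to infinity (a long-form generation task with coverage α). Let (S, U, R) be any finite-state generation model. Then there exists n₀ such that for every n ≥ n₀, Pr_{x∼D_n, y∼(U x).bind R}[y = f(x)] < α; equivalently, the error err_n := Pr_{x∼D_n, y∼(U x).bind R}[y ≠ f(x)] satisfies err_n ≥ 1 − α. -/

import Mathlib

open scoped ENNReal Classical

/-- The minimum support size of mass `α` for a probability mass function `P` on `Y`:
the least cardinality of a finite subset `A ⊆ Y` whose total `P`-mass is at least `α`. -/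
noncomputable def minSupportSize {Y : Type*} (P : PMF Y) (α : ℝ≥0∞) : ℕ :=
  sInf {n : ℕ | ∃ A : Finset Y, A.card = n ∧ α ≤ ∑ y ∈ A, P y}

lemma exists_max_of_tsum_ne_top {Y : Type*} [Nonempty Y] (ν : Y → ℝ≥0∞)
    (h : ∑' y, ν y ≠ ⊤) : ∃ y₀, ∀ y, ν y ≤ ν y₀ := by
  rcases eq_or_ne (⨆ y, ν y) 0 with h0 | h0
  · refine ⟨Classical.arbitrary Y, fun y => ?_⟩
    have h1 : ν y ≤ ⨆ y, ν y := le_iSup ν y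
    rw [h0] at h1
    simpa using h1.trans zero_le
  · have hctop : (⨆ y, ν y) ≠ ⊤ :=
      ne_top_of_le_ne_top h (iSup_le fun y => ENNReal.le_tsum y)
    have hhalf : (⨆ y, ν y) / 2 < ⨆ y, ν y := ENNReal.half_lt_self h0 hctop
    have hne0 : (⨆ y, ν y) / 2 ≠ 0 := by
      simp [ENNReal.div_eq_zero_iff, h0, hctop]
    have hfin : {y | (⨆ y, ν y) / 2 ≤ ν y}.Finite :=
      ENNReal.finite_const_le_of_tsum_ne_top h hne0
    obtain ⟨y₁, hy₁⟩ := lt_iSup_iff.mp hhalf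
    have hy₁F : y₁ ∈ hfin.toFinset := by simp [hy₁.le]
    obtain ⟨y₀, hy₀F, hy₀⟩ := Finset.exists_max_image hfin.toFinset ν ⟨y₁, hy₁F⟩
    refine ⟨y₀, fun y => ?_⟩
    by_cases hy : (⨆ y, ν y) / 2 ≤ ν y
    · exact hy₀ y (by simpa using hy)
    · have : ν y ≤ (⨆ y, ν y) / 2 := le_of_not_ge hy
      exact this.trans ((by simpa using hy₀F : (⨆ y, ν y) / 2 ≤ ν y₀))

/-- Theorem 1: on a long-form generation task with coverage `α` (the minimum support size of
the pushforward distributions is nondecreasing and tends to infinity), every finite-state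
generation model `(S, U, R)` has success probability `< α`, i.e. error `≥ 1 - α`, for all
sufficiently large complexities `n`. -/
theorem finite_state_model_fails_long_form {X Y : Type*} (α : ℝ≥0∞)
    (hα : α ∈ Set.Ioo (0 : ℝ≥0∞) 1) (f : X → Y) (D : ℕ → PMF X)
    (hmono : Monotone fun n => minSupportSize ((D n).map f) α)
    (htends : Filter.Tendsto (fun n => minSupportSize ((D n).map f) α)
      Filter.atTop Filter.atTop)
    (S : Type*) [Fintype S] (U : X → PMF S) (R : S → PMF Y) :
    ∃ n₀ : ℕ, ∀ n ≥ n₀,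
      (∑' x, D n x * ((U x).bind R) (f x)) < α ∧
        1 - α ≤ ∑' x, D n x * ∑' y, if y ≠ f x then ((U x).bind R) y else 0 := by
  set k := Fintype.card S with hk
  obtain ⟨n₀, hn₀⟩ := Filter.eventually_atTop.mp (htends.eventually_ge_atTop (k + 1))
  refine ⟨n₀, fun n hn => ?_⟩
  -- nonemptiness
  obtain ⟨x₀, hx₀⟩ := (D n).support_nonempty
  have hSne : Nonempty S := ⟨(U x₀).support_nonempty.choose⟩
  have hYne : Nonempty Y := ⟨(R (Classical.arbitrary S)).support_nonempty.choose⟩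
  -- the per-state measures on outputs
  set ν : S → Y → ℝ≥0∞ := fun s y => ∑' x, D n x * U x s * (if f x = y then 1 else 0) with hν
  have hνsum : ∀ s, ∑' y, ν s y ≤ 1 := by
    intro s
    rw [ENNReal.tsum_comm]
    have h1 : ∀ x : X, ∑' y, D n x * U x s * (if f x = y then 1 else 0) = D n x * U x s := by
      intro x
      rw [ENNReal.tsum_mul_left,
        show (∑' y : Y, if f x = y then (1:ℝ≥0∞) else 0) = 1 from by
          rw [tsum_eq_single (f x) (fun y hy => if_neg (fun h => hy h.symm))]; simp,
        mul_one]
    calc ∑' (x : X) (y : Y), D n x * U x s * (if f x = y then 1 else 0)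
        = ∑' x, D n x * U x s := by exact tsum_congr h1
      _ ≤ ∑' x, D n x := ENNReal.tsum_le_tsum fun x =>
          mul_le_of_le_one_right zero_le ((U x).coe_le_one s)
      _ = 1 := (D n).tsum_coe
  have hνtop : ∀ s, ∑' y, ν s y ≠ ⊤ := fun s => ne_top_of_le_ne_top ENNReal.one_ne_top (hνsum s)
  choose ys hys using fun s => exists_max_of_tsum_ne_top (ν s) (hνtop s)
  set A : Finset Y := Finset.univ.image ys with hA
  have hcard : A.card ≤ k := (Finset.card_image_le).trans (by simp [hk])
  -- marginal identity : ∑ s, ν s y = P y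
  have hmarg : ∀ y, ∑ s, ν s y = ((D n).map f) y := by
    intro y
    rw [PMF.map_apply]
    rw [← tsum_fintype (L := SummationFilter.unconditional _)]
    rw [ENNReal.tsum_comm]
    refine tsum_congr fun x => ?_
    calc ∑' s, D n x * U x s * (if f x = y then 1 else 0)
        = (∑' s, U x s) * (D n x * (if f x = y then 1 else 0)) := by
          rw [← ENNReal.tsum_mul_right]; refine tsum_congr fun s => by ring
      _ = if y = f x then D n x else 0 := by
          rw [(U x).tsum_coe, one_mul]
          by_cases hxy : y = f x
          · simp [hxy]
          · rw [if_neg (fun h => hxy h.symm), if_neg hxy, mul_zero]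
  -- success bound per state
  have hstate : ∀ s : S, ∑' x, D n x * (U x s * R s (f x)) ≤ ν s (ys s) := by
    intro s
    have hrw : ∀ x, D n x * (U x s * R s (f x))
        = ∑' y, D n x * U x s * (if f x = y then 1 else 0) * R s y := by
      intro x
      rw [tsum_eq_single (f x) (fun y hy => by
        rw [if_neg (fun h => hy h.symm), mul_zero, zero_mul])]
      simp [mul_assoc]
    calc ∑' x, D n x * (U x s * R s (f x))
        = ∑' (x : X) (y : Y), D n x * U x s * (if f x = y then 1 else 0) * R s y :=
          tsum_congr hrw
      _ = ∑' (y : Y) (x : X), D n x * U x s * (if f x = y then 1 else 0) * R s y :=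
          ENNReal.tsum_comm
      _ = ∑' y, ν s y * R s y := by
          refine tsum_congr fun y => ?_; rw [← ENNReal.tsum_mul_right]
      _ ≤ ∑' y, ν s (ys s) * R s y :=
          ENNReal.tsum_le_tsum fun y => mul_le_mul_left (hys s y) _
      _ = ν s (ys s) := by rw [ENNReal.tsum_mul_left, (R s).tsum_coe, mul_one]
  -- total success bound
  have hsucc_le : (∑' x, D n x * ((U x).bind R) (f x)) ≤ ∑ y ∈ A, ((D n).map f) y := by
    calc (∑' x, D n x * ((U x).bind R) (f x))
        = ∑' x, ∑' s, D n x * (U x s * R s (f x)) := by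
          refine tsum_congr fun x => ?_
          rw [PMF.bind_apply, ENNReal.tsum_mul_left]
      _ = ∑' s, ∑' x, D n x * (U x s * R s (f x)) := ENNReal.tsum_comm
      _ ≤ ∑' s, ν s (ys s) := ENNReal.tsum_le_tsum hstate
      _ = ∑ s, ν s (ys s) := tsum_fintype _
      _ ≤ ∑ s, ∑ y ∈ A, ν s y := by
          refine Finset.sum_le_sum fun s _ => ?_
          exact Finset.single_le_sum (fun y _ => (zero_le : 0 ≤ ν s y))
            (Finset.mem_image_of_mem ys (Finset.mem_univ s))
      _ = ∑ y ∈ A, ∑ s, ν s y := Finset.sum_comm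
      _ = ∑ y ∈ A, ((D n).map f) y := Finset.sum_congr rfl fun y _ => hmarg y
  -- A cannot capture mass α
  have hAlt : ∑ y ∈ A, ((D n).map f) y < α := by
    by_contra hcon
    push_neg at hcon
    have hmem : A.card ∈ {m : ℕ | ∃ B : Finset Y, B.card = m ∧ α ≤ ∑ y ∈ B, ((D n).map f) y} :=
      ⟨A, rfl, hcon⟩
    have : minSupportSize ((D n).map f) α ≤ A.card := csInf_le (OrderBot.bddBelow _) hmem
    have := (hn₀ n hn).trans this
    omega
  have hsucc : (∑' x, D n x * ((U x).bind R) (f x)) < α := lt_of_le_of_lt hsucc_le hAlt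
  refine ⟨hsucc, ?_⟩
  -- error bound
  have hsplit : (∑' x, D n x * ((U x).bind R) (f x))
      + (∑' x, D n x * ∑' y, if y ≠ f x then ((U x).bind R) y else 0) = 1 := by
    rw [← ENNReal.tsum_add]
    calc ∑' x, (D n x * ((U x).bind R) (f x)
          + D n x * ∑' y, if y ≠ f x then ((U x).bind R) y else 0)
        = ∑' x, D n x := by
          refine tsum_congr fun x => ?_
          rw [← mul_add]
          have h1 : ((U x).bind R) (f x) = ∑' y, if y = f x then ((U x).bind R) y else 0 := by
            rw [tsum_eq_single (f x) (by intro y hy; simp [hy])]; simp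
          have h2 : (∑' y, if y = f x then ((U x).bind R) y else 0)
              + (∑' y, if y ≠ f x then ((U x).bind R) y else 0) = 1 := by
            rw [← ENNReal.tsum_add, ← ((U x).bind R).tsum_coe]
            refine tsum_congr fun y => ?_
            by_cases hy : y = f x <;> simp [hy]
          rw [h1, h2, mul_one]
      _ = 1 := (D n).tsum_coe
  rw [tsub_le_iff_right]
  calc (1 : ℝ≥0∞) = _ + _ := hsplit.symm
    _ ≤ (∑' x, D n x * ∑' y, if y ≠ f x then ((U x).bind R) y else 0) + α := by
        rw [add_comm]; exact add_le_add_right hsucc.le _
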